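/- Let F = (F₁, F₂) : ℝ² → ℝ² be a C¹ diffeomorphism of the plane such that: F₁(x+1,y) = F₁(x,y) + 1 and F₂(x+1,y) = F₂(x,y) for all (x,y); F preserves the measure μ = ρ·λ, where λ is two-dimensional Lebesgue measure and ρ : ℝ² → (0,∞) is continuous and satisfies ρ(x+1,y) = ρ(x,y); and ∂F₁/∂y (x,y) > 0 everywhere (the twist condition). Let φ₁, φ₂ : ℝ → ℝ be continuous 1-periodic functions with φ₁(x) < φ₂(x) for all x, whose graphs are each invariant under F (F maps the graph of φᵢ onto itself). Define g₁(x) = F₁(x, φ₁(x)) and g₂(x) = F₁(x, φ₂(x)). Then the translation numbers satisfy r(g₁) < r(g₂). -/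

import Mathlib

open Filter Topology Set MeasureTheory

lemma aux_per_int {f : ℝ → ℝ} (h : ∀ x, f (x + 1) = f x) (x : ℝ) (n : ℤ) :
    f (x + n) = f x := by
  have hp : Function.Periodic f 1 := h
  simpa using (hp.int_mul n) x

lemma aux_lift_int {f : ℝ → ℝ} (h : ∀ x, f (x + 1) = f x + 1) (x : ℝ) (n : ℤ) :
    f (x + n) = f x + n := by
  have hp : ∀ y, (fun t => f t - t) (y + 1) = (fun t => f t - t) y := by
    intro y; simp only; rw [h y]; ring
  have := aux_per_int (f := fun t => f t - t) hp x n
  linarith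

lemma aux_per_min {f : ℝ → ℝ} (hf : Continuous f) (hper : ∀ x, f (x + 1) = f x) :
    ∃ x₀, ∀ x, f x₀ ≤ f x := by
  obtain ⟨x₀, hx₀, hmin⟩ := isCompact_Icc.exists_isMinOn (α := ℝ)
    (⟨0, by norm_num⟩ : (Icc (0:ℝ) 1).Nonempty) hf.continuousOn
  refine ⟨x₀, fun x => ?_⟩
  have h1 : f (Int.fract x + ⌊x⌋) = f (Int.fract x) := aux_per_int hper _ _
  have h2 : Int.fract x + (⌊x⌋:ℝ) = x := Int.fract_add_floor x
  have h3 : Int.fract x ∈ Icc (0:ℝ) 1 :=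
    ⟨Int.fract_nonneg x, (Int.fract_lt_one x).le⟩
  calc f x₀ ≤ f (Int.fract x) := hmin h3
    _ = f x := by rw [← h1, h2]

lemma aux_per_max {f : ℝ → ℝ} (hf : Continuous f) (hper : ∀ x, f (x + 1) = f x) :
    ∃ x₀, ∀ x, f x ≤ f x₀ := by
  obtain ⟨x₀, h⟩ := aux_per_min (f := fun x => -f x) hf.neg (fun x => by simp [hper x])
  exact ⟨x₀, fun x => by have := h x; simpa using this⟩

lemma aux_strip_min {ρ : ℝ × ℝ → ℝ} (hc : Continuous ρ)
    (hper : ∀ x y, ρ (x + 1, y) = ρ (x, y)) (c₁ c₂ : ℝ) (hcc : c₁ ≤ c₂) :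
    ∃ p₀ : ℝ × ℝ, ∀ p : ℝ × ℝ, c₁ ≤ p.2 → p.2 ≤ c₂ → ρ p₀ ≤ ρ p := by
  obtain ⟨p₀, hp₀, hmin⟩ := (isCompact_Icc.prod isCompact_Icc).exists_isMinOn
    (⟨(0, c₁), by constructor <;> constructor <;> simp [hcc]⟩ :
      ((Icc (0:ℝ) 1) ×ˢ (Icc c₁ c₂)).Nonempty) hc.continuousOn
  refine ⟨p₀, fun p h1 h2 => ?_⟩
  have h1' : ρ (Int.fract p.1 + (⌊p.1⌋:ℝ), p.2) = ρ (Int.fract p.1, p.2) :=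
    aux_per_int (f := fun x => ρ (x, p.2)) (fun x => hper x p.2) _ _
  have h2' : Int.fract p.1 + (⌊p.1⌋:ℝ) = p.1 := Int.fract_add_floor p.1
  have h3 : (Int.fract p.1, p.2) ∈ (Icc (0:ℝ) 1) ×ˢ (Icc c₁ c₂) :=
    ⟨⟨Int.fract_nonneg _, (Int.fract_lt_one _).le⟩, h1, h2⟩
  calc ρ p₀ ≤ ρ (Int.fract p.1, p.2) := hmin h3
    _ = ρ p := by rw [← h1']; rw [h2']

lemma aux_lift_unif {g : ℝ → ℝ} (hc : Continuous g) (hl : ∀ x, g (x + 1) = g x + 1)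
    {c : ℝ} (hc0 : 0 < c) :
    ∃ η, 0 < η ∧ η ≤ 1 ∧ ∀ u v : ℝ, |u - v| ≤ η → |g u - g v| ≤ c := by
  have huc : UniformContinuousOn g (Icc (-1 : ℝ) 2) :=
    (isCompact_Icc).uniformContinuousOn_of_continuous hc.continuousOn
  rw [Metric.uniformContinuousOn_iff_le] at huc
  obtain ⟨η₀, hη₀, H⟩ := huc c hc0
  refine ⟨min η₀ 1, by positivity, min_le_right _ _, fun u v huv => ?_⟩
  set n : ℤ := ⌊u⌋ with hn
  have hu : Int.fract u + (n:ℝ) = u := Int.fract_add_floor u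
  have hgu : g (Int.fract u) = g u - n := by
    have := aux_lift_int hl (Int.fract u) n; rw [hu] at this; linarith
  have hgv : g (v - n) = g v - n := by
    have := aux_lift_int hl (v - n) n
    simp only [sub_add_cancel] at this
    linarith
  have hfu : Int.fract u ∈ Icc (-1 : ℝ) 2 :=
    ⟨by linarith [Int.fract_nonneg u], by linarith [(Int.fract_lt_one u).le]⟩
  have hdist : |u - v| ≤ 1 := le_trans huv (min_le_right _ _)
  have hfv : v - (n:ℝ) ∈ Icc (-1 : ℝ) 2 := by
    constructor
    · have : Int.fract u - 1 ≤ v - n := by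
        have : u - v ≤ 1 := by cases abs_le.1 hdist; linarith
        linarith [hu]
      linarith [Int.fract_nonneg u]
    · have : v - (n:ℝ) ≤ Int.fract u + 1 := by
        have : v - u ≤ 1 := by have := abs_le.1 hdist; linarith [this.1]
        linarith [hu]
      linarith [(Int.fract_lt_one u).le]
  have hd : dist (Int.fract u) (v - (n:ℝ)) ≤ η₀ := by
    rw [Real.dist_eq]
    have : Int.fract u - (v - n) = u - v := by linarith [hu]
    rw [this]
    exact le_trans huv (min_le_left _ _)
  have := H _ hfu _ hfv hd
  rw [Real.dist_eq, hgu, hgv] at this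
  have heq : g u - n - (g v - n) = g u - g v := by ring
  rwa [heq] at this

lemma aux_band {F : ℝ × ℝ → ℝ × ℝ} (hFc : Continuous F)
    (hper1 : ∀ x y : ℝ, (F (x + 1, y)).1 = (F (x, y)).1 + 1)
    {c₁ c₂ c : ℝ} (hcc : c₁ ≤ c₂) (hc0 : 0 < c) :
    ∃ ε, 0 < ε ∧ ε ≤ 1 ∧ ∀ t y y' : ℝ, c₁ ≤ y → y ≤ c₂ → |y' - y| ≤ ε →
      |(F (t, y')).1 - (F (t, y)).1| ≤ c := by
  set f : ℝ × ℝ → ℝ := fun p => (F p).1 with hf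
  have hfc : Continuous f := continuous_fst.comp hFc
  have huc : UniformContinuousOn f ((Icc (0:ℝ) 1) ×ˢ (Icc (c₁ - 1) (c₂ + 1))) :=
    (isCompact_Icc.prod isCompact_Icc).uniformContinuousOn_of_continuous hfc.continuousOn
  rw [Metric.uniformContinuousOn_iff_le] at huc
  obtain ⟨ε₀, hε₀, H⟩ := huc c hc0
  refine ⟨min ε₀ 1, by positivity, min_le_right _ _, fun t y y' hy1 hy2 hyy => ?_⟩
  set n : ℤ := ⌊t⌋ with hn
  have ht : Int.fract t + (n:ℝ) = t := Int.fract_add_floor t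
  have hshift : ∀ z : ℝ, (F (t, z)).1 = (F (Int.fract t, z)).1 + n := by
    intro z
    have := aux_lift_int (f := fun x => (F (x, z)).1)
      (fun x => hper1 x z) (Int.fract t) n
    rw [ht] at this; linarith
  have hyy1 : |y' - y| ≤ 1 := le_trans hyy (min_le_right _ _)
  have hmem : (Int.fract t, y) ∈ (Icc (0:ℝ) 1) ×ˢ (Icc (c₁ - 1) (c₂ + 1)) :=
    ⟨⟨Int.fract_nonneg _, (Int.fract_lt_one _).le⟩, by linarith, by linarith⟩
  have hmem' : (Int.fract t, y') ∈ (Icc (0:ℝ) 1) ×ˢ (Icc (c₁ - 1) (c₂ + 1)) := by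
    have := abs_le.1 hyy1
    exact ⟨⟨Int.fract_nonneg _, (Int.fract_lt_one _).le⟩,
      by constructor <;> [linarith [this.1]; linarith [this.2]]⟩
  have hd : dist ((Int.fract t, y') : ℝ × ℝ) (Int.fract t, y) ≤ ε₀ := by
    rw [Prod.dist_eq]
    apply max_le
    · simp [hε₀.le]
    · rw [Real.dist_eq]; exact le_trans hyy (min_le_left _ _)
  have := H _ hmem' _ hmem hd
  rw [Real.dist_eq] at this
  calc |(F (t, y')).1 - (F (t, y)).1|
      = |f (Int.fract t, y') - f (Int.fract t, y)| := by
        rw [hf]; simp only; rw [hshift y', hshift y]; ring_nf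
    _ ≤ c := this

lemma aux_region_maps {G : ℝ × ℝ → ℝ × ℝ} (hGc : Continuous G)
    {φ₁ φ₂ : ℝ → ℝ} (hφ₁c : Continuous φ₁) (hφ₂c : Continuous φ₂)
    (hφlt : ∀ x, φ₁ x < φ₂ x)
    (h1 : ∀ x, (G (x, φ₁ x)).2 = φ₁ (G (x, φ₁ x)).1)
    (h2 : ∀ x, (G (x, φ₂ x)).2 = φ₂ (G (x, φ₂ x)).1)
    (hz1 : ∀ p : ℝ × ℝ, (G p).2 = φ₁ (G p).1 → p.2 = φ₁ p.1)
    (hz2 : ∀ p : ℝ × ℝ, (G p).2 = φ₂ (G p).1 → p.2 = φ₂ p.1)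
    {x y : ℝ} (hy1 : φ₁ x < y) (hy2 : y < φ₂ x) :
    φ₁ (G (x, y)).1 < (G (x, y)).2 ∧ (G (x, y)).2 < φ₂ (G (x, y)).1 := by
  constructor
  · set u : ℝ → ℝ := fun s => (G (x, s)).2 - φ₁ ((G (x, s)).1) with hu
    have huc : Continuous u := by
      apply Continuous.sub
      · exact continuous_snd.comp (hGc.comp (by fun_prop))
      · exact hφ₁c.comp (continuous_fst.comp (hGc.comp (by fun_prop)))
    have hzero : ∀ s, u s = 0 → s = φ₁ x := by
      intro s hs
      have : (G (x, s)).2 = φ₁ ((G (x, s)).1) := by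
        have := sub_eq_zero.1 hs; exact this
      exact hz1 (x, s) this
    have htop : 0 < u (φ₂ x) := by
      have h2' := h2 x
      have : u (φ₂ x) = φ₂ ((G (x, φ₂ x)).1) - φ₁ ((G (x, φ₂ x)).1) := by
        rw [hu]; simp only; rw [h2']
      rw [this]; linarith [hφlt ((G (x, φ₂ x)).1)]
    have : 0 < u y := by
      rcases lt_trichotomy (u y) 0 with h | h | h
      · exfalso
        have hsub : Icc (u y) (u (φ₂ x)) ⊆ u '' Icc y (φ₂ x) :=
          intermediate_value_Icc hy2.le huc.continuousOn
        obtain ⟨c, hc, hc0⟩ := hsub ⟨h.le, htop.le⟩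
        have := hzero c hc0
        linarith [hc.1, this ▸ hc.1]
      · exact absurd (hzero y h) (by linarith)
      · exact h
    have : 0 < (G (x, y)).2 - φ₁ ((G (x, y)).1) := this
    linarith
  · set v : ℝ → ℝ := fun s => φ₂ ((G (x, s)).1) - (G (x, s)).2 with hv
    have hvc : Continuous v := by
      apply Continuous.sub
      · exact hφ₂c.comp (continuous_fst.comp (hGc.comp (by fun_prop)))
      · exact continuous_snd.comp (hGc.comp (by fun_prop))
    have hzero : ∀ s, v s = 0 → s = φ₂ x := by
      intro s hs
      exact hz2 (x, s) (by have := sub_eq_zero.1 hs; exact this.symm)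
    have hbot : 0 < v (φ₁ x) := by
      have h1' := h1 x
      have : v (φ₁ x) = φ₂ ((G (x, φ₁ x)).1) - φ₁ ((G (x, φ₁ x)).1) := by
        rw [hv]; simp only; rw [h1']
      rw [this]; linarith [hφlt ((G (x, φ₁ x)).1)]
    have : 0 < v y := by
      rcases lt_trichotomy (v y) 0 with h | h | h
      · exfalso
        have hsub : Icc (v y) (v (φ₁ x)) ⊆ v '' Icc (φ₁ x) y := by
          have := intermediate_value_Icc' hy1.le hvc.continuousOn
          exact this
        obtain ⟨c, hc, hc0⟩ := hsub ⟨h.le, hbot.le⟩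
        have := hzero c hc0
        linarith [hc.2, this ▸ hc.2]
      · exact absurd (hzero y h) (by linarith)
      · exact h
    have : 0 < φ₂ ((G (x, y)).1) - (G (x, y)).2 := this
    linarith

open Filter Topology Set MeasureTheory

/-- The graph of a function `φ : ℝ → ℝ`, as a subset of the plane. -/
def planeGraph (φ : ℝ → ℝ) : Set (ℝ × ℝ) := {p : ℝ × ℝ | p.2 = φ p.1}

theorem poncelet_stmt2
    (F Finv : ℝ × ℝ → ℝ × ℝ)
    (hF : ContDiff ℝ 1 F) (hFinv : ContDiff ℝ 1 Finv)
    (hleft : Function.LeftInverse Finv F) (hright : Function.RightInverse Finv F)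
    (hper1 : ∀ x y : ℝ, (F (x + 1, y)).1 = (F (x, y)).1 + 1)
    (hper2 : ∀ x y : ℝ, (F (x + 1, y)).2 = (F (x, y)).2)
    (ρ : ℝ × ℝ → ℝ) (hρc : Continuous ρ) (hρpos : ∀ p : ℝ × ℝ, 0 < ρ p)
    (hρper : ∀ x y : ℝ, ρ (x + 1, y) = ρ (x, y))
    (hpres : MeasurePreserving F
      (volume.withDensity (fun p => ENNReal.ofReal (ρ p)))
      (volume.withDensity (fun p => ENNReal.ofReal (ρ p))))
    (htwist : ∀ x y : ℝ, 0 < deriv (fun s : ℝ => (F (x, s)).1) y)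
    (φ₁ φ₂ : ℝ → ℝ)
    (hφ₁c : Continuous φ₁) (hφ₂c : Continuous φ₂)
    (hφ₁per : ∀ x : ℝ, φ₁ (x + 1) = φ₁ x) (hφ₂per : ∀ x : ℝ, φ₂ (x + 1) = φ₂ x)
    (hφlt : ∀ x : ℝ, φ₁ x < φ₂ x)
    (hinv₁ : F '' planeGraph φ₁ = planeGraph φ₁)
    (hinv₂ : F '' planeGraph φ₂ = planeGraph φ₂)
    (r₁ r₂ : ℝ)
    (hr₁ : ∀ x : ℝ, Tendsto
      (fun k : ℕ => ((fun x => (F (x, φ₁ x)).1)^[k] x - x) / k) atTop (nhds r₁))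
    (hr₂ : ∀ x : ℝ, Tendsto
      (fun k : ℕ => ((fun x => (F (x, φ₂ x)).1)^[k] x - x) / k) atTop (nhds r₂)) :
    r₁ < r₂ := by
  classical
  set μ : Measure (ℝ × ℝ) := volume.withDensity (fun p => ENNReal.ofReal (ρ p)) with hμdef
  set g₁ : ℝ → ℝ := fun x => (F (x, φ₁ x)).1 with hg₁def
  set g₂ : ℝ → ℝ := fun x => (F (x, φ₂ x)).1 with hg₂def
  have hFc : Continuous F := hF.continuous
  have hFinvc : Continuous Finv := hFinv.continuous
  have hFinj : Function.Injective F := hleft.injective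
  have htwm : ∀ x : ℝ, StrictMono fun y => (F (x, y)).1 := fun x =>
    strictMono_of_deriv_pos (htwist x)
  -- graph facts for F
  have hmem₁ : ∀ x, (F (x, φ₁ x)).2 = φ₁ ((F (x, φ₁ x)).1) := by
    intro x
    have : F (x, φ₁ x) ∈ planeGraph φ₁ := by
      rw [← hinv₁]; exact mem_image_of_mem F (by simp [planeGraph])
    exact this
  have hmem₂ : ∀ x, (F (x, φ₂ x)).2 = φ₂ ((F (x, φ₂ x)).1) := by
    intro x
    have : F (x, φ₂ x) ∈ planeGraph φ₂ := by
      rw [← hinv₂]; exact mem_image_of_mem F (by simp [planeGraph])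
    exact this
  have hzF₁ : ∀ p : ℝ × ℝ, (F p).2 = φ₁ ((F p).1) → p.2 = φ₁ p.1 := by
    intro p hp
    have h : F p ∈ planeGraph φ₁ := hp
    rw [← hinv₁] at h
    obtain ⟨q, hq, hqe⟩ := h
    have := hFinj hqe
    rw [← this]; exact hq
  have hzF₂ : ∀ p : ℝ × ℝ, (F p).2 = φ₂ ((F p).1) → p.2 = φ₂ p.1 := by
    intro p hp
    have h : F p ∈ planeGraph φ₂ := hp
    rw [← hinv₂] at h
    obtain ⟨q, hq, hqe⟩ := h
    have := hFinj hqe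
    rw [← this]; exact hq
  -- graph facts for Finv
  have hmemInv₁ : ∀ x, (Finv (x, φ₁ x)).2 = φ₁ ((Finv (x, φ₁ x)).1) := by
    intro x
    have hx : ((x, φ₁ x) : ℝ × ℝ) ∈ planeGraph φ₁ := by simp [planeGraph]
    rw [← hinv₁] at hx
    obtain ⟨q, hq, hqe⟩ := hx
    have h : Finv (x, φ₁ x) = q := by rw [← hqe, hleft q]
    rw [h]; exact hq
  have hmemInv₂ : ∀ x, (Finv (x, φ₂ x)).2 = φ₂ ((Finv (x, φ₂ x)).1) := by
    intro x
    have hx : ((x, φ₂ x) : ℝ × ℝ) ∈ planeGraph φ₂ := by simp [planeGraph]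
    rw [← hinv₂] at hx
    obtain ⟨q, hq, hqe⟩ := hx
    have h : Finv (x, φ₂ x) = q := by rw [← hqe, hleft q]
    rw [h]; exact hq
  have hzInv₁ : ∀ p : ℝ × ℝ, (Finv p).2 = φ₁ ((Finv p).1) → p.2 = φ₁ p.1 := by
    intro p hp
    have h : Finv p ∈ planeGraph φ₁ := hp
    have h2 : F (Finv p) ∈ F '' planeGraph φ₁ := mem_image_of_mem F h
    rw [hinv₁, hright p] at h2
    exact h2
  have hzInv₂ : ∀ p : ℝ × ℝ, (Finv p).2 = φ₂ ((Finv p).1) → p.2 = φ₂ p.1 := by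
    intro p hp
    have h : Finv p ∈ planeGraph φ₂ := hp
    have h2 : F (Finv p) ∈ F '' planeGraph φ₂ := mem_image_of_mem F h
    rw [hinv₂, hright p] at h2
    exact h2
  -- F and Finv preserve the open region between the graphs
  have hFinvA : ∀ p : ℝ × ℝ, φ₁ (F p).1 < (F p).2 → (F p).2 < φ₂ (F p).1 →
      φ₁ p.1 < p.2 ∧ p.2 < φ₂ p.1 := by
    intro p h1 h2
    have h := aux_region_maps hFinvc hφ₁c hφ₂c hφlt hmemInv₁ hmemInv₂ hzInv₁ hzInv₂
      (x := (F p).1) (y := (F p).2) h1 h2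
    rwa [Prod.mk.eta, hleft p] at h
  -- twist consequences
  have hA1 : ∀ p : ℝ × ℝ, φ₁ p.1 < p.2 → g₁ p.1 < (F p).1 := by
    intro p h
    have h2 := htwm p.1 h
    simpa using h2
  have hA2 : ∀ p : ℝ × ℝ, p.2 < φ₂ p.1 → (F p).1 < g₂ p.1 := by
    intro p h
    have h2 := htwm p.1 h
    simpa using h2
  -- properties of g₁, g₂
  have hgr₁ : ∀ x, F (x, φ₁ x) = (g₁ x, φ₁ (g₁ x)) := fun x => Prod.ext rfl (hmem₁ x)
  have hgr₂ : ∀ x, F (x, φ₂ x) = (g₂ x, φ₂ (g₂ x)) := fun x => Prod.ext rfl (hmem₂ x)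
  have hgc₁ : Continuous g₁ :=
    continuous_fst.comp (hFc.comp (continuous_id.prodMk hφ₁c))
  have hgc₂ : Continuous g₂ :=
    continuous_fst.comp (hFc.comp (continuous_id.prodMk hφ₂c))
  have hgl₁ : ∀ x, g₁ (x + 1) = g₁ x + 1 := by
    intro x
    simp only [hg₁def]
    rw [hφ₁per x]
    exact hper1 x (φ₁ x)
  have hgl₂ : ∀ x, g₂ (x + 1) = g₂ x + 1 := by
    intro x
    simp only [hg₂def]
    rw [hφ₂per x]
    exact hper1 x (φ₂ x)
  have hginj₁ : Function.Injective g₁ := by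
    intro u v huv
    have h : F (u, φ₁ u) = F (v, φ₁ v) := by rw [hgr₁ u, hgr₁ v, huv]
    have := hFinj h
    exact (Prod.ext_iff.1 this).1
  have hginj₂ : Function.Injective g₂ := by
    intro u v huv
    have h : F (u, φ₂ u) = F (v, φ₂ v) := by rw [hgr₂ u, hgr₂ v, huv]
    have := hFinj h
    exact (Prod.ext_iff.1 this).1
  have hgm₁ : StrictMono g₁ := by
    rcases hgc₁.strictMono_of_inj hginj₁ with h | h
    · exact h
    · exfalso
      have h01 : g₁ 0 < g₁ (0 + 1) := by rw [hgl₁ 0]; linarith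
      have := h (show (0:ℝ) < 0 + 1 by norm_num)
      linarith
  have hgm₂ : StrictMono g₂ := by
    rcases hgc₂.strictMono_of_inj hginj₂ with h | h
    · exact h
    · exfalso
      have h01 : g₂ 0 < g₂ (0 + 1) := by rw [hgl₂ 0]; linarith
      have := h (show (0:ℝ) < 0 + 1 by norm_num)
      linarith
  have hglt : ∀ x, g₁ x < g₂ x := fun x => htwm x (hφlt x)
  -- circle lifts
  set G₁ : CircleDeg1Lift := ⟨⟨g₁, hgm₁.monotone⟩, hgl₁⟩ with hG₁def
  set G₂ : CircleDeg1Lift := ⟨⟨g₂, hgm₂.monotone⟩, hgl₂⟩ with hG₂def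
  have hτ₁ : G₁.translationNumber = r₁ := by
    apply G₁.translationNumber_eq_of_tendsto₀
    have h : Tendsto (fun n : ℕ => g₁^[n] 0 / (n : ℝ)) atTop (nhds r₁) := by
      have := hr₁ 0
      simpa using this
    exact h
  have hτ₂ : G₂.translationNumber = r₂ := by
    apply G₂.translationNumber_eq_of_tendsto₀
    have h : Tendsto (fun n : ℕ => g₂^[n] 0 / (n : ℝ)) atTop (nhds r₂) := by
      have := hr₂ 0
      simpa using this
    exact h
  have hle : r₁ ≤ r₂ := by
    rw [← hτ₁, ← hτ₂]
    exact CircleDeg1Lift.translationNumber_mono (fun x => (hglt x).le)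
  rcases eq_or_lt_of_le hle with heq | hlt
  swap
  · exact hlt
  exfalso
  -- displacement bounds
  have hbd₁ : ∀ k : ℕ, |g₁^[k] 0 - k * r₁| ≤ 1 := by
    intro k
    have h := G₁.dist_pow_map_zero_mul_translationNumber_le k
    rw [hτ₁] at h
    have h2 : (G₁ ^ k) 0 = g₁^[k] 0 := by rw [CircleDeg1Lift.coe_pow]; rfl
    rwa [h2, Real.dist_eq] at h
  have hbd₂ : ∀ k : ℕ, |g₂^[k] 0 - k * r₂| ≤ 1 := by
    intro k
    have h := G₂.dist_pow_map_zero_mul_translationNumber_le k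
    rw [hτ₂] at h
    have h2 : (G₂ ^ k) 0 = g₂^[k] 0 := by rw [CircleDeg1Lift.coe_pow]; rfl
    rwa [h2, Real.dist_eq] at h
  -- constants
  obtain ⟨a₁, ha₁⟩ := aux_per_min hφ₁c hφ₁per
  obtain ⟨a₂, ha₂⟩ := aux_per_max hφ₂c hφ₂per
  set c₁ : ℝ := φ₁ a₁ with hc₁def
  set c₂ : ℝ := φ₂ a₂ with hc₂def
  have hc₁ : ∀ x, c₁ ≤ φ₁ x := ha₁
  have hc₂ : ∀ x, φ₂ x ≤ c₂ := ha₂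
  have hcc : c₁ ≤ c₂ := le_trans (hc₁ a₂) (le_trans (hφlt a₂).le (hc₂ a₂))
  obtain ⟨u₀, hu₀⟩ := aux_per_min (f := fun x => g₂ x - g₁ x) (hgc₂.sub hgc₁)
    (fun x => by rw [hgl₁ x, hgl₂ x]; ring)
  set δ₀ : ℝ := g₂ u₀ - g₁ u₀ with hδ₀def
  have hδ₀pos : 0 < δ₀ := sub_pos.2 (hglt u₀)
  have hδ₀ : ∀ x, g₁ x + δ₀ ≤ g₂ x := by
    intro x; have := hu₀ x; linarith
  obtain ⟨w₀, hw₀⟩ := aux_per_min (f := fun x => φ₂ x - φ₁ x) (hφ₂c.sub hφ₁c)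
    (fun x => by rw [hφ₁per x, hφ₂per x])
  set δφ : ℝ := φ₂ w₀ - φ₁ w₀ with hδφdef
  have hδφpos : 0 < δφ := sub_pos.2 (hφlt w₀)
  have hδφ : ∀ x, φ₁ x + δφ ≤ φ₂ x := by
    intro x; have := hw₀ x; linarith
  obtain ⟨η₁, hη₁0, hη₁1, hηmod₁⟩ := aux_lift_unif hgc₁ hgl₁
    (show (0:ℝ) < δ₀/4 by linarith)
  obtain ⟨η₂, hη₂0, hη₂1, hηmod₂⟩ := aux_lift_unif hgc₂ hgl₂
    (show (0:ℝ) < δ₀/4 by linarith)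
  set η : ℝ := min η₁ η₂ with hηdef
  have hη0 : 0 < η := lt_min hη₁0 hη₂0
  have hηa : ∀ u v : ℝ, |u - v| ≤ η → |g₁ u - g₁ v| ≤ δ₀/4 :=
    fun u v h => hηmod₁ u v (le_trans h (min_le_left _ _))
  have hηb : ∀ u v : ℝ, |u - v| ≤ η → |g₂ u - g₂ v| ≤ δ₀/4 :=
    fun u v h => hηmod₂ u v (le_trans h (min_le_right _ _))
  obtain ⟨ε₀, hε₀0, hε₀1, hband⟩ := aux_band hFc hper1 hcc
    (show (0:ℝ) < δ₀/4 by linarith)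
  set ε : ℝ := min ε₀ δφ with hεdef
  have hε0 : 0 < ε := lt_min hε₀0 hδφpos
  have hεδφ : ε ≤ δφ := min_le_right _ _
  have hεε₀ : ε ≤ ε₀ := min_le_left _ _
  obtain ⟨p₀, hp₀⟩ := aux_strip_min hρc hρper c₁ c₂ hcc
  set ρm : ℝ := ρ p₀ with hρmdef
  have hρm : 0 < ρm := hρpos p₀
  set δν : ENNReal := ENNReal.ofReal (ρm * (ε * η)) with hδνdef
  have hδν0 : δν ≠ 0 := by
    rw [hδνdef]
    exact ne_of_gt (ENNReal.ofReal_pos.2 (by positivity))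
  have hδνtop : δν ≠ ⊤ := ENNReal.ofReal_ne_top
  -- the region and its slices
  set Vs : ℝ → ℝ → Set (ℝ × ℝ) := fun s t =>
    {p : ℝ × ℝ | (φ₁ p.1 < p.2 ∧ p.2 < φ₂ p.1) ∧ s ≤ p.1 ∧ p.1 < t} with hVsdef
  have hVmeas : ∀ s t, MeasurableSet (Vs s t) := by
    intro s t
    have h1 : MeasurableSet {p : ℝ × ℝ | φ₁ p.1 < p.2} :=
      measurableSet_lt ((hφ₁c.comp continuous_fst).measurable) measurable_snd
    have h2 : MeasurableSet {p : ℝ × ℝ | p.2 < φ₂ p.1} :=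
      measurableSet_lt measurable_snd ((hφ₂c.comp continuous_fst).measurable)
    have h3 : MeasurableSet {p : ℝ × ℝ | s ≤ p.1} :=
      measurable_fst measurableSet_Ici
    have h4 : MeasurableSet {p : ℝ × ℝ | p.1 < t} :=
      measurable_fst measurableSet_Iio
    have he : Vs s t = ({p : ℝ × ℝ | φ₁ p.1 < p.2} ∩ {p : ℝ × ℝ | p.2 < φ₂ p.1}) ∩
        ({p : ℝ × ℝ | s ≤ p.1} ∩ {p : ℝ × ℝ | p.1 < t}) := rfl
    rw [he]
    exact ((h1.inter h2).inter (h3.inter h4))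
  -- band sets
  set SB : ℝ → Set (ℝ × ℝ) := fun s =>
    regionBetween (fun t => φ₂ t - ε) φ₂ (Ico s (s + η)) with hSBdef
  set SB' : ℝ → Set (ℝ × ℝ) := fun s =>
    regionBetween φ₁ (fun t => φ₁ t + ε) (Ico s (s + η)) with hSB'def
  have hSBmeas : ∀ s, MeasurableSet (SB s) := fun s =>
    measurableSet_regionBetween (hφ₂c.sub continuous_const).measurable
      hφ₂c.measurable measurableSet_Ico
  have hSB'meas : ∀ s, MeasurableSet (SB' s) := fun s =>
    measurableSet_regionBetween hφ₁c.measurable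
      (hφ₁c.add continuous_const).measurable measurableSet_Ico
  have hSBvol : ∀ s, (volume : Measure (ℝ × ℝ)) (SB s)
      = ENNReal.ofReal ε * ENNReal.ofReal η := by
    intro s
    rw [hSBdef]
    simp only
    rw [Measure.volume_eq_prod, volume_regionBetween_eq_lintegral' (f := fun t => φ₂ t - ε)
      (hφ₂c.sub continuous_const).measurable hφ₂c.measurable measurableSet_Ico]
    have hi : (fun y : ℝ => ENNReal.ofReal ((φ₂ - fun t => φ₂ t - ε) y))
        = fun _ : ℝ => ENNReal.ofReal ε := by
      funext y
      simp only [Pi.sub_apply]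
      congr 1
      ring
    rw [hi, setLIntegral_const, Real.volume_Ico]
    congr 1
    simp
  have hSB'vol : ∀ s, (volume : Measure (ℝ × ℝ)) (SB' s)
      = ENNReal.ofReal ε * ENNReal.ofReal η := by
    intro s
    rw [hSB'def]
    simp only
    rw [Measure.volume_eq_prod, volume_regionBetween_eq_lintegral' (g := fun t => φ₁ t + ε)
      hφ₁c.measurable (hφ₁c.add continuous_const).measurable measurableSet_Ico]
    have hi : (fun y : ℝ => ENNReal.ofReal (((fun t => φ₁ t + ε) - φ₁) y))
        = fun _ : ℝ => ENNReal.ofReal ε := by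
      funext y
      simp only [Pi.sub_apply]
      congr 1
      ring
    rw [hi, setLIntegral_const, Real.volume_Ico]
    congr 1
    simp
  have hSBμ : ∀ s, δν ≤ μ (SB s) := by
    intro s
    have hsub : ∀ p ∈ SB s, c₁ ≤ p.2 ∧ p.2 ≤ c₂ := by
      intro p hp
      obtain ⟨hp1, hp2⟩ := hp
      have h1 := hc₁ p.1
      have h2 := hc₂ p.1
      have h3 := hδφ p.1
      obtain ⟨ha, hb⟩ := hp2
      simp only at ha hb
      constructor <;> [linarith; linarith]
    calc δν = ENNReal.ofReal ρm * (ENNReal.ofReal ε * ENNReal.ofReal η) := by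
          rw [hδνdef, ENNReal.ofReal_mul hρm.le, ENNReal.ofReal_mul hε0.le]
      _ = ENNReal.ofReal ρm * (volume : Measure (ℝ × ℝ)) (SB s) := by rw [hSBvol s]
      _ = ∫⁻ _ in SB s, ENNReal.ofReal ρm ∂volume := by rw [setLIntegral_const]
      _ ≤ ∫⁻ p in SB s, ENNReal.ofReal (ρ p) ∂volume := by
          apply setLIntegral_mono' (hSBmeas s)
          intro p hp
          exact ENNReal.ofReal_le_ofReal (hp₀ p (hsub p hp).1 (hsub p hp).2)
      _ = μ (SB s) := by rw [hμdef, withDensity_apply _ (hSBmeas s)]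
  have hSB'μ : ∀ s, δν ≤ μ (SB' s) := by
    intro s
    have hsub : ∀ p ∈ SB' s, c₁ ≤ p.2 ∧ p.2 ≤ c₂ := by
      intro p hp
      obtain ⟨hp1, hp2⟩ := hp
      have h1 := hc₁ p.1
      have h2 := hc₂ p.1
      have h3 := hδφ p.1
      obtain ⟨ha, hb⟩ := hp2
      simp only at ha hb
      constructor <;> [linarith; linarith]
    calc δν = ENNReal.ofReal ρm * (ENNReal.ofReal ε * ENNReal.ofReal η) := by
          rw [hδνdef, ENNReal.ofReal_mul hρm.le, ENNReal.ofReal_mul hε0.le]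
      _ = ENNReal.ofReal ρm * (volume : Measure (ℝ × ℝ)) (SB' s) := by rw [hSB'vol s]
      _ = ∫⁻ _ in SB' s, ENNReal.ofReal ρm ∂volume := by rw [setLIntegral_const]
      _ ≤ ∫⁻ p in SB' s, ENNReal.ofReal (ρ p) ∂volume := by
          apply setLIntegral_mono' (hSB'meas s)
          intro p hp
          exact ENNReal.ofReal_le_ofReal (hp₀ p (hsub p hp).1 (hsub p hp).2)
      _ = μ (SB' s) := by rw [hμdef, withDensity_apply _ (hSB'meas s)]
  -- the key step inequality
  have hstep : ∀ x x' : ℝ, x + (η + η) ≤ x' →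
      μ (Vs (g₂ x) (g₁ x')) + (δν + δν) ≤ μ (Vs x x') := by
    intro x x' hxx'
    set Z : Set (ℝ × ℝ) := F ⁻¹' (Vs (g₂ x) (g₁ x')) with hZdef
    have hZmeas : MeasurableSet Z := (hVmeas _ _).preimage hFc.measurable
    have hZμ : μ Z = μ (Vs (g₂ x) (g₁ x')) :=
      hpres.measure_preimage (hVmeas _ _).nullMeasurableSet
    have hZW : Z ⊆ Vs x x' := by
      intro p hp
      have hp' : F p ∈ Vs (g₂ x) (g₁ x') := hp
      obtain ⟨⟨hf1, hf2⟩, hf3, hf4⟩ := hp'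
      obtain ⟨hp1, hp2⟩ := hFinvA p hf1 hf2
      refine ⟨⟨hp1, hp2⟩, ?_, ?_⟩
      · by_contra h
        push_neg at h
        have h5 : (F p).1 < g₂ p.1 := hA2 p hp2
        have h6 : g₂ p.1 ≤ g₂ x := hgm₂.monotone h.le
        linarith
      · by_contra h
        push_neg at h
        have h5 : g₁ p.1 < (F p).1 := hA1 p hp1
        have h6 : g₁ x' ≤ g₁ p.1 := hgm₁.monotone h
        linarith
    have hSW : SB (x' - η) ⊆ Vs x x' := by
      intro p hp
      obtain ⟨hp1, hp2⟩ := hp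
      obtain ⟨ha, hb⟩ := hp2
      simp only at ha hb
      obtain ⟨hq1, hq2⟩ := hp1
      have h3 := hδφ p.1
      refine ⟨⟨by linarith, hb⟩, by linarith, by linarith⟩
    have hS'W : SB' x ⊆ Vs x x' := by
      intro p hp
      obtain ⟨hp1, hp2⟩ := hp
      obtain ⟨ha, hb⟩ := hp2
      simp only at ha hb
      obtain ⟨hq1, hq2⟩ := hp1
      have h3 := hδφ p.1
      refine ⟨⟨ha, by linarith⟩, by linarith, by linarith⟩
    have hdisj1 : Disjoint Z (SB (x' - η)) := by
      rw [Set.disjoint_left]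
      intro p hpZ hpS
      obtain ⟨hp1, hp2⟩ := hpS
      obtain ⟨ha, hb⟩ := hp2
      simp only at ha hb
      obtain ⟨hq1, hq2⟩ := hp1
      have hyy : |p.2 - φ₂ p.1| ≤ ε₀ := by
        rw [abs_le]
        constructor <;> [linarith; linarith]
      have hc₁' : c₁ ≤ φ₂ p.1 := le_trans (hc₁ p.1) (hφlt p.1).le
      have hb1 := hband p.1 (φ₂ p.1) p.2 hc₁' (hc₂ p.1) hyy
      have hb2 : |g₂ p.1 - g₂ x'| ≤ δ₀/4 := by
        apply hηb
        rw [abs_le]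
        constructor <;> [linarith; linarith]
      have hb3 := hδ₀ x'
      have hFp : F (p.1, p.2) = F p := by rw [Prod.mk.eta]
      rw [hFp] at hb1
      -- in hb1, (F (p.1, φ₂ p.1)).1 = g₂ p.1
      have hb1' : |(F p).1 - g₂ p.1| ≤ δ₀/4 := hb1
      obtain ⟨⟨_, _⟩, hz3, hz4⟩ := hpZ
      have h1 := abs_le.1 hb1'
      have h2 := abs_le.1 hb2
      linarith [h1.1, h1.2, h2.1, h2.2]
    have hdisj2 : Disjoint Z (SB' x) := by
      rw [Set.disjoint_left]
      intro p hpZ hpS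
      obtain ⟨hp1, hp2⟩ := hpS
      obtain ⟨ha, hb⟩ := hp2
      simp only at ha hb
      obtain ⟨hq1, hq2⟩ := hp1
      have hyy : |p.2 - φ₁ p.1| ≤ ε₀ := by
        rw [abs_le]
        constructor <;> [linarith; linarith]
      have hc₂' : φ₁ p.1 ≤ c₂ := le_trans (hφlt p.1).le (hc₂ p.1)
      have hb1 := hband p.1 (φ₁ p.1) p.2 (hc₁ p.1) hc₂' hyy
      have hb2 : |g₁ p.1 - g₁ x| ≤ δ₀/4 := by
        apply hηa
        rw [abs_le]
        constructor <;> [linarith; linarith]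
      have hb3 := hδ₀ x
      have hFp : F (p.1, p.2) = F p := by rw [Prod.mk.eta]
      rw [hFp] at hb1
      have hb1' : |(F p).1 - g₁ p.1| ≤ δ₀/4 := hb1
      obtain ⟨⟨_, _⟩, hz3, hz4⟩ := hpZ
      have h1 := abs_le.1 hb1'
      have h2 := abs_le.1 hb2
      linarith [h1.1, h1.2, h2.1, h2.2]
    have hdisj3 : Disjoint (SB (x' - η)) (SB' x) := by
      rw [Set.disjoint_left]
      intro p hpS hpS'
      obtain ⟨⟨h1, _⟩, _⟩ := hpS
      obtain ⟨⟨_, h2⟩, _⟩ := hpS'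
      linarith
    have hdisjU : Disjoint (Z ∪ SB (x' - η)) (SB' x) :=
      Set.disjoint_union_left.2 ⟨hdisj2, hdisj3⟩
    have hsubU : Z ∪ SB (x' - η) ∪ SB' x ⊆ Vs x x' := by
      intro p hp
      rcases hp with (hp | hp) | hp
      exacts [hZW hp, hSW hp, hS'W hp]
    calc μ (Vs (g₂ x) (g₁ x')) + (δν + δν)
        = μ Z + (δν + δν) := by rw [hZμ]
      _ ≤ μ Z + (μ (SB (x' - η)) + μ (SB' x)) := by
          exact add_le_add_right (add_le_add (hSBμ _) (hSB'μ _)) _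
      _ = μ Z + μ (SB (x' - η)) + μ (SB' x) := by rw [add_assoc]
      _ = μ (Z ∪ SB (x' - η)) + μ (SB' x) := by
          rw [measure_union hdisj1 (hSBmeas _)]
      _ = μ (Z ∪ SB (x' - η) ∪ SB' x) := by
          rw [measure_union hdisjU (hSB'meas _)]
      _ ≤ μ (Vs x x') := measure_mono hsubU
  -- finiteness of the measure of one period of the annulus
  obtain ⟨N, hN⟩ := exists_nat_ge (2 * η + 3)
  have hνfin : μ (Vs 0 (N : ℝ)) < ⊤ := by
    have hsub : Vs 0 (N : ℝ) ⊆ Icc (0:ℝ) (N:ℝ) ×ˢ Icc c₁ c₂ := by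
      intro p hp
      obtain ⟨⟨h1, h2⟩, h3, h4⟩ := hp
      exact ⟨⟨h3, h4.le⟩, le_trans (hc₁ p.1) h1.le, le_trans h2.le (hc₂ p.1)⟩
    have hKmeas : MeasurableSet (Icc (0:ℝ) (N:ℝ) ×ˢ Icc c₁ c₂) :=
      measurableSet_Icc.prod measurableSet_Icc
    obtain ⟨q₀, hq₀, hqmax⟩ := (isCompact_Icc.prod isCompact_Icc).exists_isMaxOn
      (⟨((0:ℝ), c₁), by
        constructor
        · exact ⟨le_refl _, Nat.cast_nonneg N⟩
        · exact ⟨le_refl _, hcc⟩⟩ :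
        ((Icc (0:ℝ) (N:ℝ)) ×ˢ (Icc c₁ c₂)).Nonempty) hρc.continuousOn
    calc μ (Vs 0 (N : ℝ)) ≤ μ (Icc (0:ℝ) (N:ℝ) ×ˢ Icc c₁ c₂) := measure_mono hsub
      _ = ∫⁻ p in Icc (0:ℝ) (N:ℝ) ×ˢ Icc c₁ c₂, ENNReal.ofReal (ρ p) ∂volume := by
          rw [hμdef, withDensity_apply _ hKmeas]
      _ ≤ ∫⁻ _ in Icc (0:ℝ) (N:ℝ) ×ˢ Icc c₁ c₂, ENNReal.ofReal (ρ q₀) ∂volume := by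
          apply setLIntegral_mono' hKmeas
          intro p hp
          exact ENNReal.ofReal_le_ofReal (hqmax hp)
      _ = ENNReal.ofReal (ρ q₀) * volume (Icc (0:ℝ) (N:ℝ) ×ˢ Icc c₁ c₂) := by
          rw [setLIntegral_const]
      _ < ⊤ := by
          apply ENNReal.mul_lt_top ENNReal.ofReal_lt_top
          exact (isCompact_Icc.prod isCompact_Icc).measure_lt_top
  -- the orbits
  set av : ℕ → ℝ := fun k => g₁^[k] 0 + N with havdef
  set bv : ℕ → ℝ := fun k => g₂^[k] 0 with hbvdef
  have hga : ∀ k, av (k + 1) = g₁ (av k) := by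
    intro k
    have h1 : g₁ (g₁^[k] 0 + ((N:ℤ) : ℝ)) = g₁ (g₁^[k] 0) + ((N:ℤ) : ℝ) :=
      aux_lift_int hgl₁ (g₁^[k] 0) (N : ℤ)
    simp only [havdef]
    rw [Function.iterate_succ_apply']
    push_cast at h1
    rw [h1]
  have hgb : ∀ k, bv (k + 1) = g₂ (bv k) := by
    intro k
    simp only [hbvdef]
    rw [Function.iterate_succ_apply']
  have hgap : ∀ k, bv k + (η + η) ≤ av k := by
    intro k
    have h1 := abs_le.1 (hbd₁ k)
    have h2 := abs_le.1 (hbd₂ k)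
    rw [heq] at h1
    simp only [havdef, hbvdef]
    have hN' : (2 * η + 3 : ℝ) ≤ N := hN
    linarith [h1.1, h1.2, h2.1, h2.2]
  have hiter : ∀ k : ℕ, μ (Vs (bv k) (av k)) + k * (δν + δν) ≤ μ (Vs (bv 0) (av 0)) := by
    intro k
    induction k with
    | zero => simp
    | succ k ih =>
      have hst := hstep (bv k) (av k) (hgap k)
      rw [← hgb k, ← hga k] at hst
      calc μ (Vs (bv (k+1)) (av (k+1))) + ((k+1 : ℕ) : ENNReal) * (δν + δν)
          = (μ (Vs (bv (k+1)) (av (k+1))) + (δν + δν)) + (k : ENNReal) * (δν + δν) := by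
            push_cast
            ring
        _ ≤ μ (Vs (bv k) (av k)) + (k : ENNReal) * (δν + δν) := add_le_add_left hst _
        _ ≤ _ := ih
  have hfin : μ (Vs (bv 0) (av 0)) < ⊤ := by
    have hb0 : bv 0 = 0 := by simp [hbvdef]
    have ha0 : av 0 = (N : ℝ) := by simp [havdef]
    rw [hb0, ha0]
    exact hνfin
  have hbound : ∀ k : ℕ, (k : ENNReal) * (δν + δν) ≤ μ (Vs (bv 0) (av 0)) := fun k =>
    le_trans le_add_self (hiter k)
  have hdd0 : (δν + δν) ≠ 0 := by
    simp only [ne_eq, add_eq_zero]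
    intro h
    exact hδν0 h.1
  have hddtop : (δν + δν) ≠ ⊤ := ENNReal.add_ne_top.2 ⟨hδνtop, hδνtop⟩
  obtain ⟨k, hk⟩ := ENNReal.exists_nat_gt
    (ENNReal.div_lt_top hfin.ne hdd0).ne
  have hk2 : (k : ENNReal) ≤ μ (Vs (bv 0) (av 0)) / (δν + δν) :=
    (ENNReal.le_div_iff_mul_le (Or.inl hdd0) (Or.inl hddtop)).2 (hbound k)
  exact absurd hk2 (not_le.2 hk)
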